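/- Let G be a finite connected simple graph, T a spanning tree of G, and B a biconnected component of G. Then for any two vertices u and v of B, every vertex on the unique path from u to v in T belongs to B. -/

import Mathlib

open SimpleGraph

/-- `H` is a biconnected subgraph of `G`: it is connected and has no cut vertex,
i.e. removing any single vertex leaves it connected. -/
def IsBiconnected {V : Type} (G : SimpleGraph V) (H : G.Subgraph) : Prop :=
  H.coe.Connected ∧ ∀ v ∈ H.verts, ((H.deleteVerts {v}).coe).Connected

/-- `H` is a biconnected component (block) of `G`: a maximal biconnected subgraph. -/
def IsBiconnectedComponent {V : Type} (G : SimpleGraph V) (H : G.Subgraph) : Prop :=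
  IsBiconnected G H ∧ ∀ H' : G.Subgraph, IsBiconnected G H' → H ≤ H' → H' = H

section Aux

variable {V : Type} {G : SimpleGraph V}

/-- Deleting vertices distributes over sup of subgraphs. -/
lemma aux_deleteVerts_sup (H K : G.Subgraph) (s : Set V) :
    (H ⊔ K).deleteVerts s = H.deleteVerts s ⊔ K.deleteVerts s := by
  ext x y
  · simp only [Subgraph.deleteVerts_verts, Subgraph.verts_sup, Set.union_diff_distrib]
  · simp only [Subgraph.deleteVerts_adj, Subgraph.sup_adj, Subgraph.verts_sup,
      Set.mem_union]
    constructor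
    · rintro ⟨hx, hxs, hy, hys, (h | h)⟩
      · exact Or.inl ⟨H.edge_vert h, hxs, H.edge_vert h.symm, hys, h⟩
      · exact Or.inr ⟨K.edge_vert h, hxs, K.edge_vert h.symm, hys, h⟩
    · rintro (⟨hx, hxs, hy, hys, h⟩ | ⟨hx, hxs, hy, hys, h⟩)
      · exact ⟨Or.inl hx, hxs, Or.inl hy, hys, Or.inl h⟩
      · exact ⟨Or.inr hx, hxs, Or.inr hy, hys, Or.inr h⟩

/-- Deleting a vertex not in a subgraph leaves it unchanged. -/
lemma aux_deleteVerts_not_mem {H : G.Subgraph} {x : V} (hx : x ∉ H.verts) :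
    H.deleteVerts {x} = H := by
  ext a b
  · simp only [Subgraph.deleteVerts_verts]
    constructor
    · exact fun h => h.1
    · intro h
      refine ⟨h, ?_⟩
      rintro rfl
      exact hx h
  · simp only [Subgraph.deleteVerts_adj]
    constructor
    · exact fun h => h.2.2.2.2
    · intro h
      refine ⟨H.edge_vert h, ?_, H.edge_vert h.symm, ?_, h⟩
      · rintro rfl; exact hx (H.edge_vert h)
      · rintro rfl; exact hx (H.edge_vert h.symm)

/-- Deleting the endpoint of a nontrivial path leaves a connected subgraph
containing the other endpoint. -/
lemma aux_path_deleteVerts_end {a x : V} (q : G.Walk a x) (hq : q.IsPath)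
    (hne : a ≠ x) :
    (q.toSubgraph.deleteVerts {x}).Connected ∧
      a ∈ (q.toSubgraph.deleteVerts {x}).verts := by
  obtain ⟨b, hadj, r, hr⟩ := SimpleGraph.Walk.exists_eq_cons_of_ne hne.symm q.reverse
  have hrp : q.reverse.IsPath := hq.reverse
  rw [hr, SimpleGraph.Walk.cons_isPath_iff] at hrp
  have hQ : q.toSubgraph = G.subgraphOfAdj hadj ⊔ r.toSubgraph := by
    rw [← q.toSubgraph_reverse, hr]
    rfl
  have hxr : x ∉ r.toSubgraph.verts := by
    rw [SimpleGraph.Walk.mem_verts_toSubgraph]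
    exact hrp.2
  have hrd : r.toSubgraph.deleteVerts {x} = r.toSubgraph :=
    aux_deleteVerts_not_mem hxr
  have hsub : ((G.subgraphOfAdj hadj).deleteVerts {x}).verts ⊆ r.toSubgraph.verts := by
    intro y hy
    simp only [Subgraph.deleteVerts_verts, subgraphOfAdj_verts, Set.mem_diff,
      Set.mem_insert_iff, Set.mem_singleton_iff] at hy
    obtain ⟨(rfl | rfl), hy2⟩ := hy
    · exact absurd rfl hy2
    · rw [SimpleGraph.Walk.mem_verts_toSubgraph]
      exact r.start_mem_support
  constructor
  · rw [hQ, aux_deleteVerts_sup, hrd]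
    refine Subgraph.Connected.mono le_sup_right ?_ r.toSubgraph_connected
    rw [Subgraph.verts_sup]
    exact (Set.union_eq_self_of_subset_left hsub).symm
  · simp only [Subgraph.deleteVerts_verts, Set.mem_diff, Set.mem_singleton_iff]
    exact ⟨q.start_mem_verts_toSubgraph, hne⟩

/-- Deleting the (unique) vertex of a trivial walk's subgraph yields `⊥`. -/
lemma aux_nil_deleteVerts (a : V) :
    ((SimpleGraph.Walk.nil : G.Walk a a).toSubgraph.deleteVerts {a}) = ⊥ := by
  ext x y
  · simp [Subgraph.deleteVerts_verts, SimpleGraph.Walk.toSubgraph]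
  · simp [Subgraph.deleteVerts_adj, SimpleGraph.Walk.toSubgraph]

end Aux

/-- Let `G` be a finite connected simple graph, `T` a spanning tree
of `G`, and `B` a biconnected component of `G`. Then for any two vertices `u` and `v`
of `B`, every vertex on the unique path from `u` to `v` in `T` belongs to `B`. -/
theorem SimpleGraph.Subgraph.Connected.sup {V : Type*} {G : SimpleGraph V} {H K : G.Subgraph}
    (hH : H.Connected) (hK : K.Connected) (hn : (H ⊓ K).verts.Nonempty) :
    (H ⊔ K).Connected :=
  Subgraph.connected_sup hH.preconnected hK.preconnected hn

theorem block_closed_under_tree_paths {V : Type} [Fintype V]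
    (G : SimpleGraph V) (hG : G.Connected)
    (T : SimpleGraph V) (hTG : T ≤ G) (hT : T.IsTree)
    (B : G.Subgraph) (hB : IsBiconnectedComponent G B)
    (u v : V) (hu : u ∈ B.verts) (hv : v ∈ B.verts)
    (p : T.Walk u v) (hp : p.IsPath) :
    ∀ w ∈ p.support, w ∈ B.verts := by
  classical
  by_cases huv : u = v
  · subst huv
    rw [(SimpleGraph.Walk.isPath_iff_eq_nil (p := p)).mp hp]
    intro w hw
    simp only [SimpleGraph.Walk.support_nil, List.mem_singleton] at hw
    subst hw
    exact hu
  -- Transfer the walk to `G`.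
  have hedges : ∀ e ∈ p.edges, e ∈ G.edgeSet := fun e he =>
    SimpleGraph.edgeSet_mono hTG (p.edges_subset_edgeSet he)
  set p' : G.Walk u v := p.transfer G hedges with hp'def
  have hp' : p'.IsPath := hp.transfer hedges
  set P : G.Subgraph := p'.toSubgraph with hPdef
  have huP : u ∈ P.verts := p'.start_mem_verts_toSubgraph
  have hvP : v ∈ P.verts := p'.end_mem_verts_toSubgraph
  -- `B ⊔ P` is biconnected.
  have hBconn : B.Connected := Subgraph.connected_iff'.mpr hB.1.1
  have hBd : ∀ x ∈ B.verts, (B.deleteVerts {x}).Connected := fun x hx =>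
    Subgraph.connected_iff'.mpr (hB.1.2 x hx)
  have hBdAll : ∀ x : V, x ≠ u → x ≠ v → (B.deleteVerts {x}).Connected := by
    intro x hxu hxv
    by_cases hxB : x ∈ B.verts
    · exact hBd x hxB
    · rw [aux_deleteVerts_not_mem hxB]
      exact hBconn
  have hbic : IsBiconnected G (B ⊔ P) := by
    constructor
    · refine (Subgraph.Connected.sup hBconn p'.toSubgraph_connected ?_).coe
      exact ⟨u, hu, huP⟩
    · intro x hx
      rw [← Subgraph.connected_iff']
      rw [aux_deleteVerts_sup]
      by_cases hxP : x ∈ p'.support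
      · -- split the path at x
        have hxu' : x ∈ B.verts ∨ x ∉ B.verts := em _
        have hsplit := p'.take_spec hxP
        set q := p'.takeUntil x hxP with hq
        set r := p'.dropUntil x hxP with hr
        have hqP : q.IsPath := hp'.takeUntil hxP
        have hrP : r.IsPath := hp'.dropUntil hxP
        have hPsplit : P = q.toSubgraph ⊔ r.toSubgraph := by
          rw [hPdef, ← hsplit, SimpleGraph.Walk.toSubgraph_append]
        rw [hPsplit, aux_deleteVerts_sup]
        by_cases hxu : x = u
        · -- q is trivial
          subst hxu
          have hqnil : q = SimpleGraph.Walk.nil := (SimpleGraph.Walk.isPath_iff_eq_nil (p := q)).mp hqP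
          rw [hqnil, aux_nil_deleteVerts, bot_sup_eq]
          have hR := aux_path_deleteVerts_end r.reverse hrP.reverse (Ne.symm huv)
          rw [SimpleGraph.Walk.toSubgraph_reverse] at hR
          refine Subgraph.Connected.sup (hBd x hu) hR.1 ?_
          refine ⟨v, ?_, hR.2⟩
          simp only [Subgraph.deleteVerts_verts, Set.mem_diff, Set.mem_singleton_iff]
          exact ⟨hv, Ne.symm huv⟩
        · by_cases hxv : x = v
          · -- r is trivial
            subst hxv
            have hrnil : r = SimpleGraph.Walk.nil :=
              (SimpleGraph.Walk.isPath_iff_eq_nil (p := r)).mp hrP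
            rw [hrnil, aux_nil_deleteVerts, sup_bot_eq]
            have hQ := aux_path_deleteVerts_end q hqP (Ne.symm hxu)
            refine Subgraph.Connected.sup (hBd x hv) hQ.1 ?_
            refine ⟨u, ?_, hQ.2⟩
            simp only [Subgraph.deleteVerts_verts, Set.mem_diff, Set.mem_singleton_iff]
            exact ⟨hu, fun h => hxu h.symm⟩
          · -- x is internal
            have hQ := aux_path_deleteVerts_end q hqP (Ne.symm hxu)
            have hR := aux_path_deleteVerts_end r.reverse hrP.reverse (Ne.symm hxv)
            rw [SimpleGraph.Walk.toSubgraph_reverse] at hR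
            have hBdc : (B.deleteVerts {x}).Connected :=
              hBdAll x hxu hxv
            rw [← sup_assoc]
            have hBQ : (B.deleteVerts {x} ⊔ q.toSubgraph.deleteVerts {x}).Connected := by
              refine Subgraph.Connected.sup hBdc hQ.1 ?_
              refine ⟨u, ?_, hQ.2⟩
              simp only [Subgraph.deleteVerts_verts, Set.mem_diff, Set.mem_singleton_iff]
              exact ⟨hu, fun h => hxu h.symm⟩
            refine Subgraph.Connected.sup hBQ hR.1 ?_
            refine ⟨v, ?_, hR.2⟩
            simp only [Subgraph.verts_sup, Subgraph.deleteVerts_verts, Set.mem_union,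
              Set.mem_diff, Set.mem_singleton_iff]
            exact Or.inl ⟨hv, fun h => hxv h.symm⟩
      · -- x is not on the path
        have hxPv : x ∉ P.verts := by
          rwa [hPdef, SimpleGraph.Walk.mem_verts_toSubgraph]
        have hxB : x ∈ B.verts := by
          rcases hx with h | h
          · exact h
          · exact absurd h hxPv
        rw [aux_deleteVerts_not_mem hxPv]
        refine Subgraph.Connected.sup (hBd x hxB) p'.toSubgraph_connected ?_
        refine ⟨u, ?_, huP⟩
        simp only [Subgraph.deleteVerts_verts, Set.mem_diff, Set.mem_singleton_iff]
        exact ⟨hu, fun h => hxPv (h ▸ huP)⟩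
  -- By maximality, `B ⊔ P = B`.
  have hmax : B ⊔ P = B := hB.2 (B ⊔ P) hbic le_sup_left
  intro w hw
  have hwP : w ∈ P.verts := by
    rw [hPdef, SimpleGraph.Walk.mem_verts_toSubgraph, hp'def,
      SimpleGraph.Walk.support_transfer]
    exact hw
  have : w ∈ (B ⊔ P).verts := Or.inr hwP
  rwa [hmax] at this
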